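/- Let G be a finite group, p an odd prime, A = ⟨a⟩ a cyclic subgroup of G of order pⁿ, and γ : A → Aut(G) a relative gamma function; write a^{γ(a)} = a^s. Then γ is a group homomorphism from A (with its original operation) to Aut(G) if and only if s ≡ 1 modulo the order of γ(a). In particular, if γ(a) has order p, then γ is a homomorphism. -/

import Mathlib

/- Formalization of results from "Hopf-Galois structures on extensions of degree p²q and
skew braces of order p²q: the cyclic Sylow p-subgroup case" (Campedel, Caranti, Del Corso).

Conventions: the paper composes permutations/automorphisms left-to-right and writes
`x^α` for the action; in Mathlib composition is right-to-left, so the paper's product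
`αβ` is rendered as `β * α`, the paper's `x^α` as `α x`, and the paper's conjugate
`α^β = β⁻¹αβ` as `β * α * β⁻¹`. -/

namespace HGS

universe u v

variable {G : Type*} [Group G]

/-- A relative gamma function (RGF) on a subgroup `A ≤ G` (encoded as a function on all
of `G` whose values outside `A` are irrelevant): `A` is `γ(A)`-invariant and the gamma
functional equation holds on `A`. -/
def IsRGFOn (A : Subgroup G) (γ : G → MulAut G) : Prop :=
  (∀ x ∈ A, ∀ y ∈ A, γ y x ∈ A) ∧ (∀ x ∈ A, ∀ y ∈ A, γ (γ y x * y) = γ y * γ x)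

/-! ### Auxiliary arithmetic: the sequence `t k = 1 + s + ⋯ + s^(k-1)` -/

/-- `tf s k = 1 + s + s² + ⋯ + s^(k-1)`. -/
def tf (s : ℕ) : ℕ → ℕ
  | 0 => 0
  | k + 1 => s * tf s k + 1

lemma tf_succ (s k : ℕ) : tf s (k + 1) = s * tf s k + 1 := rfl

lemma tf_key (s j : ℕ) : tf s j + s ^ j = s * tf s j + 1 := by
  induction j with
  | zero => simp [tf]
  | succ j ih =>
    calc tf s (j + 1) + s ^ (j + 1) = s * (tf s j + s ^ j) + 1 := by
          rw [tf_succ, pow_succ]; ring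
      _ = s * (s * tf s j + 1) + 1 := by rw [ih]
      _ = s * tf s (j + 1) + 1 := by rw [tf_succ]

lemma tf_add (s j m : ℕ) : tf s (j + m) = tf s j + s ^ j * tf s m := by
  induction m with
  | zero => simp [tf]
  | succ m ih =>
    calc tf s (j + (m + 1)) = s * tf s (j + m) + 1 := by
          rw [show j + (m + 1) = (j + m) + 1 by omega, tf_succ]
      _ = s * (tf s j + s ^ j * tf s m) + 1 := by rw [ih]
      _ = (s * tf s j + 1) + s ^ j * (s * tf s m) := by ring
      _ = (tf s j + s ^ j) + s ^ j * (s * tf s m) := by rw [tf_key]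
      _ = tf s j + s ^ j * (s * tf s m + 1) := by ring
      _ = tf s j + s ^ j * tf s (m + 1) := by rw [tf_succ]

lemma tf_one (m : ℕ) : tf 1 m = m := by
  induction m with
  | zero => rfl
  | succ m ih => rw [tf_succ, ih, one_mul]

lemma tf_modeq {s d : ℕ} (hsd : s ≡ 1 [MOD d]) (k : ℕ) : tf s k ≡ k [MOD d] := by
  induction k with
  | zero => rfl
  | succ k ih =>
    have := (hsd.mul ih).add_right 1
    simpa [tf_succ] using this

lemma tf_geom {R : Type*} [CommRing R] (s k : ℕ) :
    ((s : R) - 1) * (tf s k : R) + 1 = (s : R) ^ k := by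
  induction k with
  | zero => simp [tf]
  | succ k ih =>
    have : ((s : R) - 1) * (tf s (k + 1) : R) + 1 = (s : R) * (((s : R) - 1) * (tf s k : R) + 1) := by
      rw [tf_succ]; push_cast; ring
    rw [this, ih, pow_succ]; ring

lemma tf_geom_nat {s : ℕ} (hs1 : 1 ≤ s) (m : ℕ) : (s - 1) * tf s m + 1 = s ^ m := by
  induction m with
  | zero => simp [tf]
  | succ m ih =>
    calc (s - 1) * tf s (m + 1) + 1 = s * ((s - 1) * tf s m) + ((s - 1) + 1) := by
          rw [tf_succ]; ring
      _ = s * ((s - 1) * tf s m) + s := by rw [Nat.sub_add_cancel hs1]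
      _ = s * ((s - 1) * tf s m + 1) := by ring
      _ = s * s ^ m := by rw [ih]
      _ = s ^ (m + 1) := (pow_succ' s m).symm

lemma one_le_of_modeq {s p : ℕ} (hp : p.Prime) (hs : s ≡ 1 [MOD p]) : 1 ≤ s := by
  rcases Nat.eq_zero_or_pos s with rfl | h
  · exfalso
    have h1 : p ∣ 1 - 0 := (Nat.modEq_iff_dvd' (Nat.zero_le 1)).mp hs
    simp at h1
    exact hp.one_lt.ne' h1
  · exact h

lemma not_dvd_of_modeq {s p : ℕ} (hp : p.Prime) (hs : s ≡ 1 [MOD p]) : ¬ p ∣ s := by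
  intro hds
  have hs1 : 1 ≤ s := one_le_of_modeq hp hs
  have h1 : p ∣ s - 1 := (Nat.modEq_iff_dvd' hs1).mp hs.symm
  have : p ∣ 1 := by
    have := Nat.dvd_sub hds h1
    rwa [Nat.sub_sub_self hs1] at this
  simp at this
  exact hp.one_lt.ne' this

/-- Lifting-the-exponent consequence: for odd `p` and `s ≡ 1 (mod p)`,
`p^n ∣ tf s m` implies `p^n ∣ m`. -/
lemma tf_dvd {p s : ℕ} (hp : p.Prime) (hodd : Odd p) (hs : s ≡ 1 [MOD p])
    (n m : ℕ) (h : p ^ n ∣ tf s m) : p ^ n ∣ m := by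
  have hs1 : 1 ≤ s := one_le_of_modeq hp hs
  rcases eq_or_lt_of_le hs1 with hs1' | hs2
  · rw [← hs1'] at h; rwa [tf_one] at h
  rcases Nat.eq_zero_or_pos m with rfl | hm
  · exact dvd_zero _
  have hps : ¬ p ∣ s := not_dvd_of_modeq hp hs
  have hd1 : p ∣ s - 1 := (Nat.modEq_iff_dvd' hs1).mp hs.symm
  have hlte := Nat.emultiplicity_pow_sub_pow hp hodd (by simpa using hd1) hps m
  rw [one_pow] at hlte
  have heq : s ^ m - 1 = (s - 1) * tf s m := by
    have := tf_geom_nat hs1 m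
    omega
  rw [heq, emultiplicity_mul hp.prime] at hlte
  have hfin : emultiplicity p (s - 1) ≠ ⊤ :=
    finiteMultiplicity_iff_emultiplicity_ne_top.1 (Nat.finiteMultiplicity_iff.mpr ⟨hp.ne_one, by omega⟩)
  have hcancel : emultiplicity p (tf s m) = emultiplicity p m :=
    WithTop.add_left_cancel hfin hlte
  have hle : (n : ℕ∞) ≤ emultiplicity p (tf s m) := le_emultiplicity_of_pow_dvd h
  exact pow_dvd_of_le_emultiplicity (hcancel ▸ hle)

/-! ### Basic consequences of the RGF axioms -/

section RGF

variable (a : G) (γ : G → MulAut G)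

lemma gamma_one (hγ : IsRGFOn (Subgroup.zpowers a) γ) : γ 1 = 1 := by
  have h := hγ.2 1 (one_mem _) 1 (one_mem _)
  rw [show (γ 1) (1 : G) = 1 from map_one _, one_mul] at h
  exact left_eq_mul.mp h

lemma gamma_tf {s : ℕ} (hγ : IsRGFOn (Subgroup.zpowers a) γ) (hs : γ a a = a ^ s) (k : ℕ) :
    γ (a ^ tf s k) = (γ a) ^ k := by
  induction k with
  | zero => simpa [tf] using gamma_one a γ hγ
  | succ k ih =>
    have h := hγ.2 (a ^ tf s k) (pow_mem (Subgroup.mem_zpowers a) _) a (Subgroup.mem_zpowers a)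
    have h2 : (γ a) (a ^ tf s k) = a ^ (s * tf s k) := by
      rw [map_pow, hs, ← pow_mul, mul_comm]
    rw [h2, ← pow_succ] at h
    rw [tf_succ, h, ih, pow_succ']

/-- The "holomorph" permutation `g ↦ γ x g * x`. -/
def tau (x : G) : Equiv.Perm G := ((γ x) : G ≃* G).toEquiv.trans (Equiv.mulRight x)

lemma tau_apply (x g : G) : tau γ x g = γ x g * x := rfl

lemma tau_inj : Function.Injective (tau γ) := by
  intro x y h
  have := congrArg (fun (e : Equiv.Perm G) => e 1) h
  simpa [tau_apply] using this

lemma tau_one (hγ : IsRGFOn (Subgroup.zpowers a) γ) : tau γ 1 = 1 := by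
  ext g
  rw [tau_apply, gamma_one a γ hγ, mul_one]
  rfl

lemma tau_mul (hγ : IsRGFOn (Subgroup.zpowers a) γ) {x y : G}
    (hx : x ∈ Subgroup.zpowers a) (hy : y ∈ Subgroup.zpowers a) :
    tau γ x * tau γ y = tau γ (γ x y * x) := by
  ext g
  show (γ x) ((γ y) g * y) * x = (γ (γ x y * x)) g * (γ x y * x)
  rw [hγ.2 y hy x hx, map_mul, ← mul_assoc]
  rfl

lemma tau_pow {s : ℕ} (hγ : IsRGFOn (Subgroup.zpowers a) γ) (hs : γ a a = a ^ s) (k : ℕ) :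
    (tau γ a) ^ k = tau γ (a ^ tf s k) := by
  induction k with
  | zero => rw [pow_zero, show tf s 0 = 0 from rfl, pow_zero, tau_one a γ hγ]
  | succ k ih =>
    rw [pow_succ', ih, tau_mul a γ hγ (Subgroup.mem_zpowers a) (pow_mem (Subgroup.mem_zpowers a) _)]
    congr 1
    rw [map_pow, hs, ← pow_mul, tf_succ, pow_succ]

lemma exists_period [Finite G] {s : ℕ} (hγ : IsRGFOn (Subgroup.zpowers a) γ)
    (hs : γ a a = a ^ s) :
    ∃ N, 0 < N ∧ N ∣ orderOf a ∧ a ^ tf s N = 1 ∧ (γ a) ^ N = 1 := by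
  classical
  have hpowmem : ∀ x ∈ Subgroup.zpowers a, ∀ m : ℕ,
      ∃ z ∈ Subgroup.zpowers a, (tau γ x) ^ m = tau γ z := by
    intro x hx m
    induction m with
    | zero => exact ⟨1, one_mem _, by rw [pow_zero, tau_one a γ hγ]⟩
    | succ m ih =>
      obtain ⟨z, hz, hzeq⟩ := ih
      exact ⟨γ x z * x, mul_mem (hγ.1 z hz x hx) hx, by
        rw [pow_succ', hzeq, tau_mul a γ hγ hx hz]⟩
  let S : Subgroup (Equiv.Perm G) :=
    { carrier := tau γ '' (Subgroup.zpowers a : Set G)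
      one_mem' := ⟨1, one_mem _, tau_one a γ hγ⟩
      mul_mem' := by
        rintro σ σ' ⟨x, hx, rfl⟩ ⟨y, hy, rfl⟩
        exact ⟨γ x y * x, mul_mem (hγ.1 y hy x hx) hx, (tau_mul a γ hγ hx hy).symm⟩
      inv_mem' := by
        rintro σ ⟨x, hx, rfl⟩
        set M := orderOf (tau γ x) with hM
        have hMpos : 0 < M := orderOf_pos _
        have h1 : tau γ x * (tau γ x) ^ (M - 1) = 1 := by
          rw [← pow_succ']
          rw [show M - 1 + 1 = M by omega]
          exact pow_orderOf_eq_one _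
        have h2 : (tau γ x)⁻¹ = (tau γ x) ^ (M - 1) := (eq_inv_of_mul_eq_one_right h1).symm
        obtain ⟨z, hz, hzeq⟩ := hpowmem x hx (M - 1)
        rw [h2, hzeq]
        exact ⟨z, hz, rfl⟩ }
  have hmemS : tau γ a ∈ S := ⟨a, Subgroup.mem_zpowers a, rfl⟩
  have hdvd : orderOf (tau γ a) ∣ Nat.card S := S.orderOf_dvd_natCard hmemS
  have hcard : Nat.card S = orderOf a := by
    have h1 : Nat.card S = Nat.card (tau γ '' (Subgroup.zpowers a : Set G)) := rfl
    rw [h1, Nat.card_image_of_injective (tau_inj γ)]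
    simp only [SetLike.coe_sort_coe]; exact Nat.card_zpowers a
  rw [hcard] at hdvd
  refine ⟨orderOf (tau γ a), orderOf_pos _, hdvd, ?_, ?_⟩
  · have hN : tau γ (a ^ tf s (orderOf (tau γ a))) = 1 := by
      rw [← tau_pow a γ hγ hs, pow_orderOf_eq_one]
    exact tau_inj γ (hN.trans (tau_one a γ hγ).symm)
  · have hN : tau γ (a ^ tf s (orderOf (tau γ a))) = 1 := by
      rw [← tau_pow a γ hγ hs, pow_orderOf_eq_one]
    have h1 : a ^ tf s (orderOf (tau γ a)) = 1 := tau_inj γ (hN.trans (tau_one a γ hγ).symm)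
    rw [← gamma_tf a γ hγ hs, h1, gamma_one a γ hγ]

end RGF

/-- For `n ≥ 1`, an RGF on a cyclic subgroup of order `pⁿ` forces `s ≡ 1 (mod p)`. -/
lemma s_modeq_one [Finite G] {p n s : ℕ} (hp : p.Prime) (hn : 1 ≤ n)
    (a : G) (ha : orderOf a = p ^ n) (γ : G → MulAut G)
    (hγ : IsRGFOn (Subgroup.zpowers a) γ) (hs : γ a a = a ^ s) : s ≡ 1 [MOD p] := by
  haveI : Fact p.Prime := ⟨hp⟩
  obtain ⟨N, hN0, hNdvd, hNpow, -⟩ := exists_period a γ hγ hs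
  rw [ha] at hNdvd
  obtain ⟨j, hjn, rfl⟩ := (Nat.dvd_prime_pow hp).mp hNdvd
  have htf : p ∣ tf s (p ^ j) := by
    have h1 : p ^ n ∣ tf s (p ^ j) := ha ▸ orderOf_dvd_of_pow_eq_one hNpow
    exact dvd_trans (dvd_pow_self p (Nat.one_le_iff_ne_zero.mp hn)) h1
  have htf0 : ((tf s (p ^ j) : ℕ) : ZMod p) = 0 := (ZMod.natCast_eq_zero_iff _ _).mpr htf
  have hgeom := tf_geom (R := ZMod p) s (p ^ j)
  rw [htf0, mul_zero, zero_add] at hgeom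
  have hfermat : ∀ (x : ZMod p) (i : ℕ), x ^ (p ^ i) = x := by
    intro x i
    induction i with
    | zero => simp
    | succ i ih => rw [pow_succ, pow_mul, ih, ZMod.pow_card]
  have : ((s : ℕ) : ZMod p) = 1 := by rw [← hfermat (s : ZMod p) j, ← hgeom]
  have h1 : ((s : ℕ) : ZMod p) = ((1 : ℕ) : ZMod p) := by rwa [Nat.cast_one]
  exact (ZMod.natCast_eq_natCast_iff _ _ _).mp h1

/-- Surjectivity of `k ↦ tf s k` modulo `pⁿ` for `p` odd and `s ≡ 1 (mod p)`. -/
lemma tf_surj {p n s : ℕ} (hp : p.Prime) (hodd : Odd p) (hs : s ≡ 1 [MOD p]) (m : ℕ) :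
    ∃ k : ℕ, tf s k ≡ m [MOD p ^ n] := by
  have hppos : 0 < p ^ n := Nat.pow_pos hp.pos
  have hcop : (p ^ n).Coprime s :=
    Nat.Coprime.pow_left n (hp.coprime_iff_not_dvd.mpr (not_dvd_of_modeq hp hs))
  have hinj : ∀ j k : ℕ, j ≤ k → tf s j ≡ tf s k [MOD p ^ n] → p ^ n ∣ k - j := by
    intro j k hjk hmod
    obtain ⟨m', rfl⟩ : ∃ m', k = j + m' := ⟨k - j, by omega⟩
    rw [tf_add] at hmod
    have h0 : tf s j + s ^ j * tf s m' ≡ tf s j + 0 [MOD p ^ n] := by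
      simpa using hmod.symm
    have h1 : s ^ j * tf s m' ≡ 0 [MOD p ^ n] := Nat.ModEq.add_left_cancel' _ h0
    have h2 : p ^ n ∣ s ^ j * tf s m' := Nat.modEq_zero_iff_dvd.mp h1
    have h3 : p ^ n ∣ tf s m' :=
      (Nat.Coprime.dvd_of_dvd_mul_left (Nat.Coprime.pow_right j hcop) h2)
    have h4 : p ^ n ∣ m' := tf_dvd hp hodd hs n m' h3
    simpa using h4
  let f : Fin (p ^ n) → Fin (p ^ n) := fun k => ⟨tf s k % p ^ n, Nat.mod_lt _ hppos⟩
  have hfinj : Function.Injective f := by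
    intro j k hjk
    have hmod : tf s (j : ℕ) ≡ tf s (k : ℕ) [MOD p ^ n] := by
      simpa [f, Nat.ModEq] using congrArg (fun x : Fin (p ^ n) => (x : ℕ)) hjk
    have hj := j.isLt
    have hk := k.isLt
    rcases le_total (j : ℕ) (k : ℕ) with h | h
    · have hd := hinj j k h hmod
      have h0 : (k : ℕ) - (j : ℕ) = 0 := Nat.eq_zero_of_dvd_of_lt hd (by omega)
      exact Fin.ext (by omega)
    · have hd := hinj k j h hmod.symm
      have h0 : (j : ℕ) - (k : ℕ) = 0 := Nat.eq_zero_of_dvd_of_lt hd (by omega)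
      exact Fin.ext (by omega)
  have hfsurj : Function.Surjective f := Finite.injective_iff_surjective.mp hfinj
  obtain ⟨k, hk⟩ := hfsurj ⟨m % p ^ n, Nat.mod_lt _ hppos⟩
  refine ⟨k, ?_⟩
  have : tf s (k : ℕ) % p ^ n = m % p ^ n := congrArg (fun x : Fin (p ^ n) => (x : ℕ)) hk
  exact this

theorem rgf_morphism_iff_congruence
    {G : Type u} [Group G] [Finite G] {p n : ℕ} (hp : p.Prime) (hp2 : p ≠ 2)
    (a : G) (ha : orderOf a = p ^ n) (γ : G → MulAut G)
    (hγ : IsRGFOn (Subgroup.zpowers a) γ) (s : ℕ) (hs : γ a a = a ^ s) :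
    ((∀ x ∈ Subgroup.zpowers a, ∀ y ∈ Subgroup.zpowers a, γ (x * y) = γ y * γ x) ↔
      s ≡ 1 [MOD orderOf (γ a)]) ∧
    (orderOf (γ a) = p →
      ∀ x ∈ Subgroup.zpowers a, ∀ y ∈ Subgroup.zpowers a, γ (x * y) = γ y * γ x) := by
  classical
  have hodd : Odd p := hp.odd_of_ne_two hp2
  rcases Nat.eq_zero_or_pos n with rfl | hn
  · -- trivial case `n = 0`, i.e. `a = 1`
    have ha1 : a = 1 := orderOf_eq_one_iff.mp (by rw [ha, pow_zero])
    have hγ1 : γ 1 = 1 := gamma_one a γ hγ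
    have hmem : ∀ x ∈ Subgroup.zpowers a, x = 1 := by
      rintro x ⟨k, rfl⟩
      simp [ha1]
    have hmor : ∀ x ∈ Subgroup.zpowers a, ∀ y ∈ Subgroup.zpowers a,
        γ (x * y) = γ y * γ x := by
      intro x hx y hy
      rw [hmem x hx, hmem y hy, one_mul, hγ1, one_mul]
    refine ⟨⟨fun _ => ?_, fun _ => hmor⟩, fun _ => hmor⟩
    rw [ha1, hγ1, orderOf_one]
    exact Nat.modEq_one
  -- main case `n ≥ 1`
  have hs1p : s ≡ 1 [MOD p] := s_modeq_one hp hn a ha γ hγ hs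
  obtain ⟨N, hN0, hNdvd, hNpow, hNγ⟩ := exists_period a γ hγ hs
  have hddvd : orderOf (γ a) ∣ p ^ n :=
    dvd_trans (orderOf_dvd_of_pow_eq_one hNγ) (ha ▸ hNdvd)
  have hfo : IsOfFinOrder a := by
    rw [← orderOf_pos_iff]
    rw [ha]
    exact Nat.pow_pos hp.pos
  have hnatpow : ∀ x ∈ Subgroup.zpowers a, ∃ i : ℕ, a ^ i = x := by
    intro x hx
    exact hfo.mem_powers_iff_mem_zpowers.mpr hx
  have hiff : (∀ x ∈ Subgroup.zpowers a, ∀ y ∈ Subgroup.zpowers a,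
      γ (x * y) = γ y * γ x) ↔ s ≡ 1 [MOD orderOf (γ a)] := by
    constructor
    · intro H
      have hps : γ (a ^ s) = γ a := by
        have h1 := hγ.2 a (Subgroup.mem_zpowers a) a (Subgroup.mem_zpowers a)
        rw [hs] at h1
        have h2 := H (a ^ s) (pow_mem (Subgroup.mem_zpowers a) s) a (Subgroup.mem_zpowers a)
        rw [h2] at h1
        exact mul_left_cancel h1
      have hpk : ∀ k : ℕ, γ (a ^ k) = (γ a) ^ k := by
        intro k
        induction k with
        | zero => simpa using gamma_one a γ hγ
        | succ k ih =>
          rw [pow_succ, H (a ^ k) (pow_mem (Subgroup.mem_zpowers a) k) a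
            (Subgroup.mem_zpowers a), ih, pow_succ']
      have : (γ a) ^ s = (γ a) ^ 1 := by rw [← hpk s, hps, pow_one]
      exact pow_eq_pow_iff_modEq.mp this
    · intro hmod
      have hkey : ∀ m : ℕ, γ (a ^ m) = (γ a) ^ m := by
        intro m
        obtain ⟨k, hk⟩ := tf_surj (n := n) hp hodd hs1p m
        have h1 : a ^ m = a ^ tf s k := by
          apply pow_eq_pow_iff_modEq.mpr
          rw [ha]
          exact hk.symm
        rw [h1, gamma_tf a γ hγ hs]
        apply pow_eq_pow_iff_modEq.mpr
        have h2 : tf s k ≡ k [MOD orderOf (γ a)] := tf_modeq hmod k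
        have h3 : tf s k ≡ m [MOD orderOf (γ a)] := hk.of_dvd hddvd
        exact h2.symm.trans h3
      intro x hx y hy
      obtain ⟨i, rfl⟩ := hnatpow x hx
      obtain ⟨j, rfl⟩ := hnatpow y hy
      rw [← pow_add, hkey, hkey, hkey, ← pow_add, Nat.add_comm]
  refine ⟨hiff, fun hop => hiff.mpr ?_⟩
  rw [hop]
  exact hs1p

end HGS
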